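/- There exist 2^𝔠 pairwise incompatible ideals on ω that are simultaneously meager and null subsets of 2^ω. Explicitly: fix a partition (Iₙ) of ω into intervals with |Iₙ| = n+1; for X ⊆ ω let X^I = ⋃_{m∈X}{k : k is the m-th element of some Iₙ}; for each maximal (prime) ideal J on ω let 𝓘_J be the ideal generated by {X^I : X ∈ J}. Then each 𝓘_J is a proper ideal which is meager and null in 2^ω, and distinct maximal ideals J₁ ≠ J₂ yield ideals 𝓘_{J₁}, 𝓘_{J₂} with no common proper ideal extension. -/

import Mathlib

/-- An ideal on ω: contains all finite sets, downward closed, closed under unions. -/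
def IsIdeal (I : Set (Set ℕ)) : Prop :=
  (∀ X : Set ℕ, X.Finite → X ∈ I) ∧
  (∀ X Y : Set ℕ, X ⊆ Y → Y ∈ I → X ∈ I) ∧
  (∀ X Y : Set ℕ, X ∈ I → Y ∈ I → X ∪ Y ∈ I)

open Classical in
/-- The characteristic function of `X`, restricted to `A`, as a point of `2^A`. -/
noncomputable def chiA (A : Set ℕ) (X : Set ℕ) : ↥A → Bool := fun i => decide ((i : ℕ) ∈ X)

/-- A family `S` of subsets of ω is meager in `2^A`. -/
def MeagerIn (A : Set ℕ) (S : Set (Set ℕ)) : Prop := IsMeagre (chiA A '' S)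

noncomputable section
open MeasureTheory

instance : TopologicalSpace (Multiplicative (ZMod 2)) := ⊥
instance : DiscreteTopology (Multiplicative (ZMod 2)) := ⟨rfl⟩
instance : IsTopologicalGroup (Multiplicative (ZMod 2)) := by
  first
    | (constructor <;> exact continuous_of_discreteTopology)
    | (constructor <;> constructor <;> exact continuous_of_discreteTopology)
instance cantorMS (ι : Type) : MeasurableSpace (ι → Multiplicative (ZMod 2)) := borel _
instance (ι : Type) : BorelSpace (ι → Multiplicative (ZMod 2)) := ⟨rfl⟩

/-- The Haar ("coin-flipping") measure on the generalized Cantor space `2^ι`. -/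
def coinMeasure (ι : Type) : Measure (ι → Multiplicative (ZMod 2)) :=
  Measure.haarMeasure ⟨⟨Set.univ, isCompact_univ⟩, by
    rw [interior_univ]; exact Set.univ_nonempty⟩

open Classical in
/-- The characteristic function of `X`, restricted to `A`, as a point of `2^A`
(with values in the two-element group). -/
def chiG (A : Set ℕ) (X : Set ℕ) : ↥A → Multiplicative (ZMod 2) :=
  fun i => if (i : ℕ) ∈ X then Multiplicative.ofAdd 1 else Multiplicative.ofAdd 0

/-- A family `S` of subsets of ω is null in `2^A` (w.r.t. the coin-flipping measure). -/
def NullIn (A : Set ℕ) (S : Set (Set ℕ)) : Prop := coinMeasure ↥A (chiG A '' S) = 0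

end

/-- Proper ideals containing all finite sets that are maximal: complements of
nonprincipal ultrafilters. -/
def MaxIdeal (J : Set (Set ℕ)) : Prop :=
  IsIdeal J ∧ Set.univ ∉ J ∧ ∀ A : Set ℕ, A ∈ J ∨ Aᶜ ∈ J

/-- `X^I`: for the interval partition `(Iₙ)` of ω with `|Iₙ| = n+1`,
`Iₙ = [n(n+1)/2, (n+1)(n+2)/2)`, take for each `m ∈ X` the `m`-th element of every
interval that has one. -/
def liftX (X : Set ℕ) : Set ℕ :=
  {k | ∃ n m : ℕ, m ∈ X ∧ m ≤ n ∧ k = n * (n + 1) / 2 + m}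

/-- The ideal generated by `{X^I : X ∈ J}` (together with the finite sets). -/
def genLift (J : Set (Set ℕ)) : Set (Set ℕ) := {Z | ∃ X ∈ J, (Z \ liftX X).Finite}

/-! ### Auxiliary material -/

namespace MINAux

/-! #### Triangular numbers and the lift -/

def tri (n : ℕ) : ℕ := n * (n + 1) / 2

lemma tri_succ (n : ℕ) : tri (n + 1) = tri n + (n + 1) := by
  unfold tri
  have h := Nat.triangle_succ (n + 1)
  simp only [Nat.add_sub_cancel] at h
  rw [mul_comm (n + 1) (n + 1 + 1), mul_comm n (n + 1)]
  exact h

lemma tri_strictMono : StrictMono tri :=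
  strictMono_nat_of_lt_succ fun n => by rw [tri_succ]; omega

lemma le_tri (n : ℕ) : n ≤ tri n := by
  induction n with
  | zero => simp [tri]
  | succ k ih => rw [tri_succ]; omega

lemma exists_decomp (k : ℕ) : ∃ n m, m ≤ n ∧ k = tri n + m := by
  induction k with
  | zero => exact ⟨0, 0, le_refl _, by simp [tri]⟩
  | succ k ih =>
    obtain ⟨n, m, hmn, hk⟩ := ih
    rcases eq_or_lt_of_le hmn with h | h
    · exact ⟨n + 1, 0, Nat.zero_le _, by rw [tri_succ]; omega⟩
    · exact ⟨n, m + 1, by omega, by omega⟩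

lemma decomp_unique {n m n' m' : ℕ} (h : m ≤ n) (h' : m' ≤ n')
    (e : tri n + m = tri n' + m') : n = n' ∧ m = m' := by
  have key : ∀ a b : ℕ, a < b → ∀ x y : ℕ, x ≤ a → y ≤ b → tri a + x ≠ tri b + y := by
    intro a b hab x y hx hy
    have : tri (a+1) ≤ tri b := tri_strictMono.monotone hab
    rw [tri_succ] at this
    omega
  rcases lt_trichotomy n n' with hlt | heq | hgt
  · exact absurd e (key n n' hlt m m' h h')
  · subst heq; omega
  · exact absurd e.symm (key n' n hgt m' m h' h)

lemma mem_liftX {k : ℕ} {X : Set ℕ} : k ∈ liftX X ↔ ∃ n m, m ∈ X ∧ m ≤ n ∧ k = tri n + m :=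
  Iff.rfl

lemma tri_add_mem_liftX {m n : ℕ} {X : Set ℕ} (hm : m ∈ X) (hmn : m ≤ n) :
    tri n + m ∈ liftX X := ⟨n, m, hm, hmn, rfl⟩

lemma tri_add_not_mem_liftX {m n : ℕ} {X : Set ℕ} (hm : m ∉ X) (hmn : m ≤ n) :
    tri n + m ∉ liftX X := by
  rintro ⟨n', m', hm', hmn', he⟩
  obtain ⟨rfl, rfl⟩ := decomp_unique hmn hmn' he
  exact hm hm'

lemma liftX_mono {X Y : Set ℕ} (h : X ⊆ Y) : liftX X ⊆ liftX Y := by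
  rintro k ⟨n, m, hm, hmn, rfl⟩; exact ⟨n, m, h hm, hmn, rfl⟩

lemma liftX_univ : liftX (Set.univ : Set ℕ) = Set.univ := by
  ext k
  simp only [Set.mem_univ, iff_true, mem_liftX]
  obtain ⟨n, m, hmn, hk⟩ := exists_decomp k
  exact ⟨n, m, trivial, hmn, hk⟩

/-! #### `genLift J` is a proper ideal, and incompatibility -/

lemma mem_genLift_self {J : Set (Set ℕ)} {X : Set ℕ} (hX : X ∈ J) : liftX X ∈ genLift J :=
  ⟨X, hX, by simp⟩

lemma isIdeal_genLift {J : Set (Set ℕ)} (hJ : IsIdeal J) : IsIdeal (genLift J) := by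
  obtain ⟨hfin, hdown, hunion⟩ := hJ
  refine ⟨fun X hX => ⟨∅, hfin ∅ (Set.finite_empty), hX.diff⟩, ?_, ?_⟩
  · rintro X Y hXY ⟨W, hW, hfinY⟩
    exact ⟨W, hW, hfinY.subset (Set.diff_subset_diff_left hXY)⟩
  · rintro X Y ⟨W, hW, hfX⟩ ⟨V, hV, hfY⟩
    refine ⟨W ∪ V, hunion _ _ hW hV, (hfX.union hfY).subset ?_⟩
    rintro k ⟨hk, hk2⟩
    rcases hk with hk | hk
    · exact Or.inl ⟨hk, fun h => hk2 (liftX_mono Set.subset_union_left h)⟩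
    · exact Or.inr ⟨hk, fun h => hk2 (liftX_mono Set.subset_union_right h)⟩

lemma maxIdeal_ne_univ {J : Set (Set ℕ)} (hJ : MaxIdeal J) {X : Set ℕ} (hX : X ∈ J) :
    X ≠ Set.univ := by
  rintro rfl; exact hJ.2.1 hX

lemma univ_not_mem_genLift {J : Set (Set ℕ)} (hJ : MaxIdeal J) : Set.univ ∉ genLift J := by
  rintro ⟨X, hX, hfin⟩
  obtain ⟨m₀, hm₀⟩ : ∃ m, m ∉ X := by
    by_contra h
    push_neg at h
    exact maxIdeal_ne_univ hJ hX (Set.eq_univ_of_forall h)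
  have hinj : Function.Injective (fun n : ℕ => tri (m₀ + n) + m₀) := fun a b hab => by
    simp only [Nat.add_right_cancel_iff] at hab
    have := tri_strictMono.injective hab
    omega
  have : Set.range (fun n : ℕ => tri (m₀ + n) + m₀) ⊆ Set.univ \ liftX X := by
    rintro k ⟨n, rfl⟩
    exact ⟨trivial, tri_add_not_mem_liftX hm₀ (by omega)⟩
  exact (Set.infinite_range_of_injective hinj) (hfin.subset this)

lemma incompatible {J₁ J₂ : Set (Set ℕ)} (h₁ : MaxIdeal J₁) (h₂ : MaxIdeal J₂)
    (hne : J₁ ≠ J₂) :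
    ¬ ∃ K : Set (Set ℕ), IsIdeal K ∧ Set.univ ∉ K ∧ genLift J₁ ⊆ K ∧ genLift J₂ ⊆ K := by
  rintro ⟨K, hK, hKuniv, hK1, hK2⟩
  have key : ∀ A : Set ℕ, A ∈ J₁ → Aᶜ ∈ J₂ → False := by
    intro A hA hAc
    have h1 : liftX A ∈ K := hK1 (mem_genLift_self hA)
    have h2 : liftX Aᶜ ∈ K := hK2 (mem_genLift_self hAc)
    have h3 : liftX A ∪ liftX Aᶜ ∈ K := hK.2.2 _ _ h1 h2
    have h4 : Set.univ ⊆ liftX A ∪ liftX Aᶜ := by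
      rw [← liftX_univ]
      rintro k ⟨n, m, _, hmn, rfl⟩
      by_cases hm : m ∈ A
      · exact Or.inl ⟨n, m, hm, hmn, rfl⟩
      · exact Or.inr ⟨n, m, hm, hmn, rfl⟩
    exact hKuniv (hK.2.1 _ _ h4 h3)
  obtain ⟨A, hA⟩ : ∃ A, ¬(A ∈ J₁ ↔ A ∈ J₂) := by
    by_contra h
    push_neg at h
    exact hne (Set.ext h)
  by_cases h1 : A ∈ J₁ <;> by_cases h2 : A ∈ J₂
  · exact hA ⟨fun _ => h2, fun _ => h1⟩
  · rcases h₂.2.2 A with h | h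
    · exact h2 h
    · exact key A h1 h
  · rcases h₁.2.2 A with h | h
    · exact h1 h
    · refine key Aᶜ h ?_
      rwa [compl_compl]
  · exact hA ⟨fun h => absurd h h1, fun h => absurd h h2⟩

lemma genLift_injOn {J₁ J₂ : Set (Set ℕ)} (h₁ : MaxIdeal J₁) (h₂ : MaxIdeal J₂)
    (h : genLift J₁ = genLift J₂) : J₁ = J₂ := by
  by_contra hne
  exact incompatible h₁ h₂ hne ⟨genLift J₁, isIdeal_genLift h₁.1,
    univ_not_mem_genLift h₁, subset_rfl, h ▸ subset_rfl⟩

/-! #### The covering by "missing column" sets -/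

def kap (N m n : ℕ) : ℕ := tri (m + N + n) + m

lemma kap_inj (N m : ℕ) : Function.Injective (kap N m) := fun a b hab => by
  unfold kap at hab
  simp only [Nat.add_right_cancel_iff] at hab
  have := tri_strictMono.injective hab
  omega

def Bad (N m : ℕ) : Set (Set ℕ) := {Z | ∀ n, kap N m n ∉ Z}

lemma genLift_subset_bad {J : Set (Set ℕ)} (hJ : MaxIdeal J) :
    genLift J ⊆ ⋃ N, ⋃ m, Bad N m := by
  rintro Z ⟨X, hX, hfin⟩
  obtain ⟨m₀, hm₀⟩ : ∃ m, m ∉ X := by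
    by_contra h
    push_neg at h
    exact maxIdeal_ne_univ hJ hX (Set.eq_univ_of_forall h)
  obtain ⟨b, hb⟩ := hfin.bddAbove
  refine Set.mem_iUnion.mpr ⟨b + 1, Set.mem_iUnion.mpr ⟨m₀, fun n hn => ?_⟩⟩
  have hnl : kap (b + 1) m₀ n ∉ liftX X := tri_add_not_mem_liftX hm₀ (by omega)
  have hmem : kap (b + 1) m₀ n ∈ Z \ liftX X := ⟨hn, hnl⟩
  have hle : kap (b + 1) m₀ n ≤ b := hb hmem
  have : m₀ + (b + 1) + n ≤ kap (b + 1) m₀ n := le_trans (le_tri _) (Nat.le_add_right _ _)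
  omega

/-! #### Meagerness -/

def EBool (N m : ℕ) : Set (↥(Set.univ : Set ℕ) → Bool) :=
  {f | ∀ n, f ⟨kap N m n, trivial⟩ = false}

lemma chiA_image_Bad_subset (N m : ℕ) : chiA Set.univ '' Bad N m ⊆ EBool N m := by
  rintro f ⟨Z, hZ, rfl⟩ n
  simp only [chiA, decide_eq_false_iff_not]
  exact hZ n

lemma isClosed_EBool (N m : ℕ) : IsClosed (EBool N m) := by
  have : EBool N m = ⋂ n, (fun f : ↥(Set.univ : Set ℕ) → Bool =>
      f ⟨kap N m n, trivial⟩) ⁻¹' {false} := by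
    ext f; simp [EBool]
  rw [this]
  exact isClosed_iInter fun n => (isClosed_singleton).preimage (continuous_apply _)

lemma interior_EBool (N m : ℕ) : interior (EBool N m) = ∅ := by
  by_contra h
  obtain ⟨f, hf⟩ := Set.nonempty_iff_ne_empty.mpr h
  obtain ⟨I, u, hu, hsub⟩ := (isOpen_pi_iff.mp isOpen_interior) f hf
  have : ∃ n : ℕ, (⟨kap N m n, trivial⟩ : ↥(Set.univ : Set ℕ)) ∉ I := by
    by_contra hc
    push_neg at hc
    have hinj : Function.Injective
        (fun n => (⟨kap N m n, trivial⟩ : ↥(Set.univ : Set ℕ))) := by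
      intro a b hab
      exact kap_inj N m (congrArg Subtype.val hab)
    exact Set.infinite_range_of_injective hinj
      (I.finite_toSet.subset (Set.range_subset_iff.mpr hc))
  obtain ⟨n, hn⟩ := this
  set i : ↥(Set.univ : Set ℕ) := ⟨kap N m n, trivial⟩
  have hmem : Function.update f i true ∈ (I : Set ↥(Set.univ : Set ℕ)).pi u := by
    intro a ha
    rw [Function.update_of_ne (by rintro rfl; exact hn ha)]
    exact (hu a ha).2
  have : Function.update f i true ∈ EBool N m := interior_subset (hsub hmem)
  have := this n
  rw [show (⟨kap N m n, trivial⟩ : ↥(Set.univ : Set ℕ)) = i from rfl,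
    Function.update_self] at this
  simp at this

lemma isMeagre_of_closed_interior {X : Type*} [TopologicalSpace X] {s : Set X}
    (hc : IsClosed s) (hi : interior s = ∅) : IsMeagre s := by
  rw [isMeagre_iff_countable_union_isNowhereDense]
  exact ⟨{s}, by simpa [hc.isNowhereDense_iff], Set.countable_singleton s, by simp⟩

lemma meagerIn_of_subset_bad {S : Set (Set ℕ)} (h : S ⊆ ⋃ N, ⋃ m, Bad N m) :
    MeagerIn Set.univ S := by
  have hsub : chiA Set.univ '' S ⊆ ⋃ N, ⋃ m, EBool N m := by
    rintro f ⟨Z, hZ, rfl⟩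
    obtain ⟨_, ⟨N, rfl⟩, _, ⟨m, rfl⟩, hB⟩ := h hZ
    exact Set.mem_iUnion.mpr ⟨N, Set.mem_iUnion.mpr ⟨m, chiA_image_Bad_subset N m ⟨Z, hB, rfl⟩⟩⟩
  refine IsMeagre.mono hsub ?_
  refine isMeagre_iUnion fun N => isMeagre_iUnion fun m => ?_
  exact isMeagre_of_closed_interior (isClosed_EBool N m) (interior_EBool N m)

/-! #### Nullness -/

open MeasureTheory

open Classical in
/-- A set of functions forced to be the identity on infinitely many coordinates is null. -/
lemma coinMeasure_null_of_forced {ι : Type} (c : ℕ → ι) (hc : Function.Injective c)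
    (B : Set (ι → Multiplicative (ZMod 2)))
    (hB : B = {f | ∀ n, f (c n) = Multiplicative.ofAdd 0}) :
    coinMeasure ι B = 0 := by
  classical
  have hinv : (coinMeasure ι).IsMulLeftInvariant := by
    unfold coinMeasure; infer_instance
  have hBclosed : IsClosed B := by
    rw [hB]
    have : {f : ι → Multiplicative (ZMod 2) | ∀ n, f (c n) = Multiplicative.ofAdd 0}
        = ⋂ n, (fun f : ι → Multiplicative (ZMod 2) => f (c n)) ⁻¹' {Multiplicative.ofAdd 0} := by
      ext f; simp
    rw [this]
    exact isClosed_iInter fun n => (isClosed_singleton).preimage (continuous_apply _)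
  have hBmeas : MeasurableSet B := hBclosed.measurableSet
  set g : ℕ → (ι → Multiplicative (ZMod 2)) :=
    fun i x => if x = c i then Multiplicative.ofAdd 1 else Multiplicative.ofAdd 0 with hg
  set D : ℕ → Set (ι → Multiplicative (ZMod 2)) := fun i => (fun f => g i * f) ⁻¹' B with hD
  have hone : (Multiplicative.ofAdd (0 : ZMod 2)) = (1 : Multiplicative (ZMod 2)) := rfl
  have hmemD : ∀ i f, f ∈ D i ↔ (f (c i) = Multiplicative.ofAdd 1 ∧
      ∀ n, n ≠ i → f (c n) = Multiplicative.ofAdd 0) := by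
    intro i f
    simp only [hD, Set.mem_preimage, hB, Set.mem_setOf_eq, Pi.mul_apply, hg]
    constructor
    · intro h
      constructor
      · have h2 := h i
        rw [if_pos rfl] at h2
        have h3 : f (c i) = (Multiplicative.ofAdd (1 : ZMod 2))⁻¹ * Multiplicative.ofAdd 0 := by
          rw [← h2]; group
        rw [h3]; decide
      · intro n hn
        have h2 := h n
        rwa [if_neg (fun he => hn (hc he)), hone, one_mul] at h2
    · rintro ⟨h1, h2⟩ n
      by_cases hn : n = i
      · subst hn; rw [if_pos rfl, h1]; decide
      · rw [if_neg (fun he => hn (hc he)), hone, one_mul]; exact h2 n hn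
  have hmul : ∀ i, Measurable (fun f : ι → Multiplicative (ZMod 2) => g i * f) :=
    fun i => (Homeomorph.mulLeft (g i)).measurable
  have hDmeas : ∀ i, MeasurableSet (D i) := fun i => hBmeas.preimage (hmul i)
  have hDdisj : Pairwise (Function.onFun Disjoint D) := by
    intro i j hij
    rw [Function.onFun, Set.disjoint_left]
    intro f hfi hfj
    have h1 := ((hmemD i f).mp hfi).1
    have h2 := ((hmemD j f).mp hfj).2 i hij
    rw [h1] at h2
    have h3 : (Multiplicative.ofAdd (1 : ZMod 2)) ≠ Multiplicative.ofAdd 0 := by decide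
    exact h3 h2
  have hDmu : ∀ i, coinMeasure ι (D i) = coinMeasure ι B := by
    intro i
    rw [hD]
    calc coinMeasure ι ((fun f => g i * f) ⁻¹' B)
        = ((coinMeasure ι).map (fun f : ι → Multiplicative (ZMod 2) => g i * f)) B := by
          rw [Measure.map_apply (hmul i) hBmeas]
      _ = coinMeasure ι B := by rw [map_mul_left_eq_self (coinMeasure ι) (g i)]
  have huniv : coinMeasure ι Set.univ = 1 := by
    unfold coinMeasure
    exact Measure.haarMeasure_self
  by_contra hne
  have hsum : ∑' _ : ℕ, coinMeasure ι B = coinMeasure ι (⋃ i, D i) := by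
    rw [measure_iUnion hDdisj hDmeas]
    exact tsum_congr fun i => (hDmu i).symm
  have h1 : coinMeasure ι (⋃ i, D i) = ⊤ := by
    rw [← hsum]
    exact ENNReal.tsum_const_eq_top_of_ne_zero hne
  have h2 : coinMeasure ι (⋃ i, D i) ≤ 1 := huniv ▸ measure_mono (Set.subset_univ _)
  rw [h1] at h2
  exact absurd h2 (by simp)

def EG (N m : ℕ) : Set (↥(Set.univ : Set ℕ) → Multiplicative (ZMod 2)) :=
  {f | ∀ n, f ⟨kap N m n, trivial⟩ = Multiplicative.ofAdd 0}

lemma chiG_image_Bad_subset (N m : ℕ) : chiG Set.univ '' Bad N m ⊆ EG N m := by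
  rintro f ⟨Z, hZ, rfl⟩ n
  simp only [chiG]
  rw [if_neg (hZ n)]

lemma nullIn_of_subset_bad {S : Set (Set ℕ)} (h : S ⊆ ⋃ N, ⋃ m, Bad N m) :
    NullIn Set.univ S := by
  have hsub : chiG Set.univ '' S ⊆ ⋃ N, ⋃ m, EG N m := by
    rintro f ⟨Z, hZ, rfl⟩
    obtain ⟨_, ⟨N, rfl⟩, _, ⟨m, rfl⟩, hB⟩ := h hZ
    exact Set.mem_iUnion.mpr ⟨N, Set.mem_iUnion.mpr ⟨m, chiG_image_Bad_subset N m ⟨Z, hB, rfl⟩⟩⟩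
  refine measure_mono_null hsub ?_
  refine measure_iUnion_null fun N => measure_iUnion_null fun m => ?_
  refine coinMeasure_null_of_forced
    (fun n => (⟨kap N m n, trivial⟩ : ↥(Set.univ : Set ℕ))) ?_ _ rfl
  intro a b hab
  exact kap_inj N m (congrArg Subtype.val hab)

/-! #### There are `2^𝔠` maximal ideals (Pospíšil-style construction) -/

noncomputable section

abbrev DD : Type := Finset ℚ × Finset (Finset ℚ)

instance : Denumerable DD := Denumerable.ofEncodableOfInfinite DD

def eD : ℕ ≃ DD := (Denumerable.eqv DD).symm

def cut (r : ℝ) (F : Finset ℚ) : Finset ℚ := F.filter (fun q => (q : ℝ) < r)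

/-- The independent family indexed by ℝ. -/
def Ar (r : ℝ) : Set ℕ := {d | cut r (eD d).1 ∈ (eD d).2}

open Classical in
def sep (a b : ℝ) : ℚ := if h : a < b then (exists_rat_btwn h).choose else 0

lemma sep_spec {a b : ℝ} (h : a < b) : a < (sep a b : ℝ) ∧ ((sep a b : ℝ)) < b := by
  rw [sep, dif_pos h]
  exact (exists_rat_btwn h).choose_spec

lemma cut_ne {a b : ℝ} {F : Finset ℚ} (h : a < b) (hF : sep a b ∈ F) :
    cut a F ≠ cut b F := by
  intro he
  obtain ⟨h1, h2⟩ := sep_spec h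
  have hb : sep a b ∈ cut b F := Finset.mem_filter.mpr ⟨hF, h2⟩
  rw [← he] at hb
  exact absurd (Finset.mem_filter.mp hb).2 (not_lt.mpr h1.le)

/-- Independence: finite boolean combinations of the `Ar` are infinite. -/
lemma indep (s t : Finset ℝ) (hst : ∀ r ∈ s, r ∉ t) :
    ((⋂ r ∈ s, Ar r) ∩ ⋂ r ∈ t, (Ar r)ᶜ).Infinite := by
  classical
  set u : Finset ℝ := s ∪ t with hu
  set F₀ : Finset ℚ := (u ×ˢ u).image (fun p => sep p.1 p.2) with hF₀
  set B : ℚ := ((F₀.sup fun q => ⌈q⌉₊ : ℕ) : ℚ) + 1 with hB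
  set F : ℕ → Finset ℚ := fun n => F₀ ∪ (Finset.range n).image (fun i : ℕ => B + (i : ℚ)) with hF
  have hfresh : ∀ (n : ℕ) (q : ℚ), q ∈ F₀ → q < B + (n : ℚ) := fun n q hq => by
    have h1 : q ≤ (⌈q⌉₊ : ℚ) := Nat.le_ceil q
    have h2 : (⌈q⌉₊ : ℕ) ≤ (F₀.sup fun q => ⌈q⌉₊) := Finset.le_sup hq
    have h2' : ((⌈q⌉₊ : ℕ) : ℚ) ≤ ((F₀.sup fun q => ⌈q⌉₊ : ℕ) : ℚ) := by exact_mod_cast h2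
    have hn : (0 : ℚ) ≤ (n : ℚ) := Nat.cast_nonneg n
    rw [hB]; linarith
  have hcard : ∀ n, (F n).card = F₀.card + n := by
    intro n
    have hFn : F n = F₀ ∪ (Finset.range n).image (fun i : ℕ => B + (i : ℚ)) := rfl
    have hdisj : Disjoint F₀ ((Finset.range n).image (fun i : ℕ => B + (i : ℚ))) := by
      rw [Finset.disjoint_right]
      intro q hq hq0
      obtain ⟨i, hi, rfl⟩ := Finset.mem_image.mp hq
      have := hfresh i _ hq0
      have hin : (i : ℚ) ≤ n := by exact_mod_cast (Finset.mem_range.mp hi).le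
      linarith
    have himg : ((Finset.range n).image (fun i : ℕ => B + (i : ℚ))).card = n := by
      rw [Finset.card_image_of_injective _ (fun a b hab => by
        have h : (a : ℚ) = (b : ℚ) := add_left_cancel hab
        exact_mod_cast h), Finset.card_range]
    rw [hFn, Finset.card_union_of_disjoint hdisj, himg]
  have hFinj : Function.Injective F := fun a b hab => by
    have := hcard a ▸ hcard b ▸ congrArg Finset.card hab
    omega
  have hsepF : ∀ n, ∀ a ∈ u, ∀ b ∈ u, sep a b ∈ F n := fun n a ha b hb =>
    Finset.mem_union_left _ (Finset.mem_image.mpr ⟨(a, b), Finset.mem_product.mpr ⟨ha, hb⟩, rfl⟩)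
  have hcut_inj : ∀ n, ∀ a ∈ u, ∀ b ∈ u, a ≠ b → cut a (F n) ≠ cut b (F n) := by
    intro n a ha b hb hab
    rcases lt_or_gt_of_ne hab with h | h
    · exact cut_ne h (hsepF n a ha b hb)
    · exact fun he => cut_ne h (hsepF n b hb a ha) he.symm
  set X : ℕ → Finset (Finset ℚ) := fun n => s.image (fun r => cut r (F n)) with hX
  set d : ℕ → ℕ := fun n => eD.symm (F n, X n) with hd
  have hdinj : Function.Injective d := fun a b hab => by
    have := eD.symm.injective hab
    exact hFinj (congrArg Prod.fst this)
  apply Set.infinite_of_injective_forall_mem hdinj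
  intro n
  have heval : eD (d n) = (F n, X n) := eD.apply_symm_apply _
  constructor
  · refine Set.mem_iInter₂.mpr fun r hr => ?_
    show cut r (eD (d n)).1 ∈ (eD (d n)).2
    rw [heval]
    exact Finset.mem_image_of_mem _ hr
  · refine Set.mem_iInter₂.mpr fun r hr => ?_
    intro hmem
    have : cut r (eD (d n)).1 ∈ (eD (d n)).2 := hmem
    rw [heval] at this
    obtain ⟨r', hr', he⟩ := Finset.mem_image.mp this
    exact hcut_inj n r' (Finset.mem_union_left _ hr') r (Finset.mem_union_right _ hr)
      (fun hrr => hst r' hr' (hrr ▸ hr)) he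

/-- the generating family for `S`. -/
def gen (S : Set ℝ) : Set (Set ℕ) :=
  {x | ∃ r, (r ∈ S ∧ x = Ar r) ∨ (r ∉ S ∧ x = (Ar r)ᶜ)}

lemma sInter_gen_infinite {S : Set ℝ} (T : Finset (Set ℕ)) (hT : ↑T ⊆ gen S) :
    (⋂₀ (T : Set (Set ℕ))).Infinite := by
  classical
  have hchoice : ∀ x : {x // x ∈ T}, ∃ r, (r ∈ S ∧ x.1 = Ar r) ∨ (r ∉ S ∧ x.1 = (Ar r)ᶜ) :=
    fun x => hT x.2
  choose φ hφ using hchoice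
  set s' : Finset ℝ := (T.attach.filter (fun x => φ x ∈ S)).image φ with hs'
  set t' : Finset ℝ := (T.attach.filter (fun x => φ x ∉ S)).image φ with ht'
  have hdisj : ∀ r ∈ s', r ∉ t' := by
    intro r hr hrt
    obtain ⟨x, hx, rfl⟩ := Finset.mem_image.mp hr
    obtain ⟨y, hy, he⟩ := Finset.mem_image.mp hrt
    exact (Finset.mem_filter.mp hy).2 (he ▸ (Finset.mem_filter.mp hx).2)
  refine (indep s' t' hdisj).mono ?_
  rintro k ⟨h1, h2⟩ x hx
  rcases hφ ⟨x, hx⟩ with ⟨hin, hxe⟩ | ⟨hout, hxe⟩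
  · have : k ∈ (⟨x, hx⟩ : {x // x ∈ T}).1 := hxe ▸
      Set.mem_iInter₂.mp h1 _ (Finset.mem_image_of_mem _
        (Finset.mem_filter.mpr ⟨Finset.mem_attach _ _, hin⟩))
    exact this
  · have : k ∈ (⟨x, hx⟩ : {x // x ∈ T}).1 := hxe ▸
      Set.mem_iInter₂.mp h2 _ (Finset.mem_image_of_mem _
        (Finset.mem_filter.mpr ⟨Finset.mem_attach _ _, hout⟩))
    exact this

lemma exists_ultra (S : Set ℝ) :
    ∃ U : Ultrafilter ℕ, ((U : Filter ℕ) ≤ Filter.cofinite) ∧ ∀ r : ℝ, (Ar r ∈ U ↔ r ∈ S) := by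
  set f : Filter ℕ := Filter.generate (gen S) ⊓ Filter.cofinite with hf
  have hne : f.NeBot := by
    rw [Filter.neBot_iff]
    intro hbot
    have he0 : (∅ : Set ℕ) ∈ f := hbot ▸ Filter.mem_bot
    rw [hf, Filter.mem_inf_iff] at he0
    obtain ⟨t₁, ht₁, t₂, ht₂, he⟩ := he0
    obtain ⟨T, hTsub, hTfin, hTint⟩ := Filter.mem_generate_iff.mp ht₁
    obtain ⟨T', hT'⟩ := hTfin.exists_finset_coe
    have hinf : (⋂₀ T).Infinite := by
      rw [← hT']
      exact sInter_gen_infinite T' (hT' ▸ hTsub)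
    have : ((⋂₀ T) \ t₂ᶜ).Infinite := hinf.diff ht₂
    obtain ⟨k, hk1, hk2⟩ := this.nonempty
    have : k ∈ t₁ ∩ t₂ := ⟨hTint hk1, not_not.mp hk2⟩
    rw [← he] at this
    exact this
  refine ⟨Ultrafilter.of f, ?_, ?_⟩
  · exact le_trans (Ultrafilter.of_le f) inf_le_right
  · intro r
    constructor
    · intro hU
      by_contra hr
      have h1 : (Ar r)ᶜ ∈ Filter.generate (gen S) :=
        Filter.mem_generate_of_mem ⟨r, Or.inr ⟨hr, rfl⟩⟩
      have h2 : (Ar r)ᶜ ∈ Ultrafilter.of f :=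
        (Ultrafilter.of_le f) (Filter.mem_inf_of_left h1)
      exact (Ultrafilter.compl_mem_iff_notMem.mp h2) hU
    · intro hr
      have h1 : Ar r ∈ Filter.generate (gen S) :=
        Filter.mem_generate_of_mem ⟨r, Or.inl ⟨hr, rfl⟩⟩
      exact (Ultrafilter.of_le f) (Filter.mem_inf_of_left h1)

/-- the maximal ideal dual to an ultrafilter -/
def Jof (U : Ultrafilter ℕ) : Set (Set ℕ) := {A | Aᶜ ∈ U}

lemma maxIdeal_Jof {U : Ultrafilter ℕ} (hU : (U : Filter ℕ) ≤ Filter.cofinite) :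
    MaxIdeal (Jof U) := by
  refine ⟨⟨?_, ?_, ?_⟩, ?_, ?_⟩
  · intro X hX
    have : Xᶜ ∈ Filter.cofinite := by
      rw [Filter.mem_cofinite, compl_compl]; exact hX
    exact hU this
  · intro X Y hXY hY
    exact Filter.mem_of_superset hY (Set.compl_subset_compl.mpr hXY)
  · intro X Y hX hY
    show (X ∪ Y)ᶜ ∈ U
    rw [Set.compl_union]
    exact Filter.inter_mem hX hY
  · intro h
    have : (Set.univ : Set ℕ)ᶜ ∈ U := h
    rw [Set.compl_univ] at this
    exact U.neBot.ne (Filter.empty_mem_iff_bot.mp this)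
  · intro A
    rcases U.mem_or_compl_mem Aᶜ with h | h
    · exact Or.inl h
    · exact Or.inr h

lemma Jof_inj {U₁ U₂ : Ultrafilter ℕ} (h : Jof U₁ = Jof U₂) : U₁ = U₂ := by
  apply Ultrafilter.coe_injective
  apply Filter.ext
  intro A
  have := Set.ext_iff.mp h Aᶜ
  simpa [Jof] using this

end

end MINAux

/-- There are `2^𝔠` pairwise incompatible ideals on ω that are both meager and null:
for every maximal ideal `J`, the ideal `𝓘_J` generated by `{X^I : X ∈ J}` is a proper
ideal which is meager and null in `2^ω`, distinct maximal ideals give ideals with no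
common proper ideal extension, and there are `2^𝔠` of them. -/
theorem many_incompatible_meager_null_ideals :
    (∃ 𝓕 : Set (Set (Set ℕ)), Cardinal.mk ↥𝓕 = 2 ^ Cardinal.continuum ∧
      (∀ I ∈ 𝓕, IsIdeal I ∧ Set.univ ∉ I ∧ MeagerIn Set.univ I ∧ NullIn Set.univ I) ∧
      (∀ I ∈ 𝓕, ∀ I' ∈ 𝓕, I ≠ I' →
        ¬ ∃ K : Set (Set ℕ), IsIdeal K ∧ Set.univ ∉ K ∧ I ⊆ K ∧ I' ⊆ K)) ∧
    (∀ J : Set (Set ℕ), MaxIdeal J →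
      IsIdeal (genLift J) ∧ Set.univ ∉ genLift J ∧
      MeagerIn Set.univ (genLift J) ∧ NullIn Set.univ (genLift J)) ∧
    (∀ J₁ J₂ : Set (Set ℕ), MaxIdeal J₁ → MaxIdeal J₂ → J₁ ≠ J₂ →
      ¬ ∃ K : Set (Set ℕ), IsIdeal K ∧ Set.univ ∉ K ∧ genLift J₁ ⊆ K ∧ genLift J₂ ⊆ K) := by
  classical
  have part2 : ∀ J : Set (Set ℕ), MaxIdeal J →
      IsIdeal (genLift J) ∧ Set.univ ∉ genLift J ∧
      MeagerIn Set.univ (genLift J) ∧ NullIn Set.univ (genLift J) := by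
    intro J hJ
    exact ⟨MINAux.isIdeal_genLift hJ.1, MINAux.univ_not_mem_genLift hJ,
      MINAux.meagerIn_of_subset_bad (MINAux.genLift_subset_bad hJ),
      MINAux.nullIn_of_subset_bad (MINAux.genLift_subset_bad hJ)⟩
  refine ⟨?_, part2, fun J₁ J₂ h₁ h₂ hne => MINAux.incompatible h₁ h₂ hne⟩
  refine ⟨genLift '' {J | MaxIdeal J}, ?_, ?_, ?_⟩
  · -- cardinality
    apply le_antisymm
    · calc Cardinal.mk ↥(genLift '' {J | MaxIdeal J})
          ≤ Cardinal.mk (Set (Set ℕ)) := Cardinal.mk_set_le _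
        _ = 2 ^ Cardinal.continuum := by
          rw [Cardinal.mk_set, Cardinal.mk_set, Cardinal.mk_nat,
            Cardinal.two_power_aleph0]
    · -- lower bound via the 2^𝔠 ultrafilters
      have hstep : ∀ S : Set ℝ, ∃ U : Ultrafilter ℕ, MaxIdeal (MINAux.Jof U) ∧
          ∀ r : ℝ, (MINAux.Ar r ∈ U ↔ r ∈ S) := fun S => by
        obtain ⟨U, hU1, hU2⟩ := MINAux.exists_ultra S
        exact ⟨U, MINAux.maxIdeal_Jof hU1, hU2⟩
      choose Uf hUmax hUspec using hstep
      set Φ : Set ℝ → Set (Set ℕ) := fun S => genLift (MINAux.Jof (Uf S)) with hΦ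
      have hΦinj : Function.Injective Φ := by
        intro S₁ S₂ he
        have hJ : MINAux.Jof (Uf S₁) = MINAux.Jof (Uf S₂) :=
          MINAux.genLift_injOn (hUmax S₁) (hUmax S₂) he
        have hU : Uf S₁ = Uf S₂ := MINAux.Jof_inj hJ
        ext r
        rw [← hUspec S₁ r, ← hUspec S₂ r, hU]
      have hΦmem : ∀ S, Φ S ∈ genLift '' {J | MaxIdeal J} := fun S => ⟨_, hUmax S, rfl⟩
      have hle := Cardinal.mk_le_of_injective (f := fun S : Set ℝ =>
          (⟨Φ S, hΦmem S⟩ : ↥(genLift '' {J | MaxIdeal J})))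
        (fun a b hab => hΦinj (congrArg Subtype.val hab))
      calc (2 : Cardinal) ^ Cardinal.continuum = Cardinal.mk (Set ℝ) := by
            rw [Cardinal.mk_set, Cardinal.mk_real]
        _ ≤ _ := hle
  · rintro I ⟨J, hJ, rfl⟩
    exact part2 J hJ
  · rintro I ⟨J₁, hJ₁, rfl⟩ I' ⟨J₂, hJ₂, rfl⟩ hne
    exact MINAux.incompatible hJ₁ hJ₂ (fun h => hne (congrArg genLift h))
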